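/- Fix δ ∈ ℂ and 0 ≤ k ≤ N−1, and suppose H_{k+1} − δ·I_{k+1} is invertible. Set B := ((H_{k+1} − δ·I_{k+1})^{−1})^* (the conjugate transpose of the inverse). Then B is (0,1)-upper-separable: for every 1 ≤ j ≤ k+1, the submatrix of B formed by rows 1, …, j and columns j, …, k+1 has rank at most 1. Moreover, for 1 ≤ m ≤ k+1 and 1 ≤ ℓ ≤ k−m+2, the submatrix H̃ of B formed by the first m rows and the last ℓ columns satisfies ‖H̃‖ ≤ ‖(H_{k+1} − δ·I_{k+1})^{−1}‖ · σ_{m−1}(δ)/σ_{k−ℓ+1}(δ), where ‖·‖ denotes the spectral norm. -/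

import Mathlib

open Polynomial Matrix Finset

/-- `σ_k(δ) = sqrt(Σ_{j=0}^k |q_j(δ)|²)`. -/
noncomputable def sigmaP (q : ℕ → Polynomial ℂ) (δ : ℂ) (k : ℕ) : ℝ :=
  Real.sqrt (∑ j ∈ Finset.range (k + 1), ‖(q j).eval δ‖ ^ 2)

/-- The spectral (ℓ²-operator) norm of a complex matrix. -/
noncomputable def specNorm {m n : ℕ} (M : Matrix (Fin m) (Fin n) ℂ) : ℝ :=
  ‖LinearMap.toContinuousLinearMap (Matrix.toEuclideanLin M)‖

lemma enorm_symm {n : ℕ} (v : Fin n → ℂ) :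
    ‖(WithLp.equiv 2 (Fin n → ℂ)).symm v‖ = Real.sqrt (∑ j, ‖v j‖ ^ 2) := by
  rw [EuclideanSpace.norm_eq]
  simp

lemma specNorm_nonneg {m n : ℕ} (M : Matrix (Fin m) (Fin n) ℂ) : 0 ≤ specNorm M :=
  norm_nonneg _

lemma specNorm_mulVec_le {m n : ℕ} (M : Matrix (Fin m) (Fin n) ℂ) (v : Fin n → ℂ) :
    Real.sqrt (∑ i, ‖M.mulVec v i‖ ^ 2)
      ≤ specNorm M * Real.sqrt (∑ j, ‖v j‖ ^ 2) := by
  have h := (LinearMap.toContinuousLinearMap (Matrix.toEuclideanLin M)).le_opNorm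
      ((WithLp.equiv 2 (Fin n → ℂ)).symm v)
  rw [LinearMap.coe_toContinuousLinearMap', enorm_symm, Matrix.toEuclideanLin_apply,
    EuclideanSpace.norm_eq] at h
  exact h

lemma specNorm_le_bound {m n : ℕ} (M : Matrix (Fin m) (Fin n) ℂ) {C : ℝ} (hC : 0 ≤ C)
    (h : ∀ v : Fin n → ℂ, Real.sqrt (∑ i, ‖M.mulVec v i‖ ^ 2)
        ≤ C * Real.sqrt (∑ j, ‖v j‖ ^ 2)) : specNorm M ≤ C := by
  refine ContinuousLinearMap.opNorm_le_bound _ hC fun x => ?_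
  have h2 := h (WithLp.equiv 2 (Fin n → ℂ) x)
  rw [← enorm_symm (WithLp.equiv 2 (Fin n → ℂ) x), (WithLp.equiv 2 (Fin n → ℂ)).symm_apply_apply] at h2
  refine le_trans (le_of_eq ?_) h2
  rw [LinearMap.coe_toContinuousLinearMap', Matrix.toEuclideanLin_apply, EuclideanSpace.norm_eq]
  rfl

lemma sum_extend_eq {α : Type*} [AddCommMonoid α] {n s : ℕ} (c : Fin s → Fin n)
    (hc : Function.Injective c) (F : Fin n → ℂ → α) (hF : ∀ j, F j 0 = 0) (v : Fin s → ℂ) :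
    ∑ j : Fin n, F j (Function.extend c v 0 j) = ∑ t : Fin s, F (c t) (v t) := by
  rw [← Finset.sum_subset (Finset.subset_univ (Finset.univ.image c))
    (fun x _ hx => by
      rw [Function.extend_apply' _ _ _ (by simpa [Finset.mem_image] using hx)]
      exact hF x)]
  rw [Finset.sum_image (fun a _ b _ h => hc h)]
  exact Finset.sum_congr rfl fun t _ => by rw [hc.extend_apply]

lemma specNorm_submatrix_le {m n p s : ℕ} (M : Matrix (Fin m) (Fin n) ℂ)
    (r : Fin p → Fin m) (c : Fin s → Fin n) (hr : Function.Injective r)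
    (hc : Function.Injective c) :
    specNorm (M.submatrix r c) ≤ specNorm M := by
  refine specNorm_le_bound _ (specNorm_nonneg M) fun v => ?_
  set w : Fin n → ℂ := Function.extend c v 0 with hw
  have hmv : ∀ i, (M.submatrix r c).mulVec v i = M.mulVec w (r i) := by
    intro i
    simp only [Matrix.mulVec, dotProduct, Matrix.submatrix_apply, hw]
    exact (sum_extend_eq c hc (fun j z => M (r i) j * z) (fun j => mul_zero _) v).symm
  have hwv : ∑ j, ‖w j‖ ^ 2 = ∑ t, ‖v t‖ ^ 2 := by
    rw [hw]
    exact sum_extend_eq c hc (fun j z => ‖z‖ ^ 2) (fun j => by simp) v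
  have h1 : ∑ i, ‖(M.submatrix r c).mulVec v i‖ ^ 2
      ≤ ∑ j, ‖M.mulVec w j‖ ^ 2 := by
    calc ∑ i, ‖(M.submatrix r c).mulVec v i‖ ^ 2
        = ∑ i, ‖M.mulVec w (r i)‖ ^ 2 := by
          exact Finset.sum_congr rfl fun i _ => by rw [hmv]
      _ = ∑ j ∈ Finset.univ.image r, ‖M.mulVec w j‖ ^ 2 := by
          rw [Finset.sum_image (fun a _ b _ h => hr h)]
      _ ≤ ∑ j, ‖M.mulVec w j‖ ^ 2 :=
          Finset.sum_le_sum_of_subset_of_nonneg (Finset.subset_univ _)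
            (fun j _ _ => by positivity)
  calc Real.sqrt (∑ i, ‖(M.submatrix r c).mulVec v i‖ ^ 2)
      ≤ Real.sqrt (∑ j, ‖M.mulVec w j‖ ^ 2) := Real.sqrt_le_sqrt h1
    _ ≤ specNorm M * Real.sqrt (∑ j, ‖w j‖ ^ 2) := specNorm_mulVec_le M w
    _ = specNorm M * Real.sqrt (∑ t, ‖v t‖ ^ 2) := by rw [hwv]

lemma outer_mulVec {m n : ℕ} (x : Fin m → ℂ) (y : Fin n → ℂ) (v : Fin n → ℂ) (i : Fin m) :
    (Matrix.of fun i j => x i * y j).mulVec v i = x i * ∑ j, y j * v j := by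
  simp only [Matrix.mulVec, dotProduct, Matrix.of_apply, Finset.mul_sum]
  exact Finset.sum_congr rfl fun j _ => by ring

lemma sqrt_sum_smul {m : ℕ} (x : Fin m → ℂ) (s : ℂ) :
    Real.sqrt (∑ i, ‖x i * s‖ ^ 2)
      = Real.sqrt (∑ i, ‖x i‖ ^ 2) * ‖s‖ := by
  rw [← Real.sqrt_sq (norm_nonneg s), ← Real.sqrt_mul (by positivity : (0:ℝ) ≤ ∑ i, ‖x i‖ ^ 2)]
  congr 1
  rw [Finset.sum_mul]
  exact Finset.sum_congr rfl fun i _ => by rw [norm_mul, mul_pow]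

lemma specNorm_outer_le {m n : ℕ} (x : Fin m → ℂ) (y : Fin n → ℂ) :
    specNorm (Matrix.of fun i j => x i * y j)
      ≤ Real.sqrt (∑ i, ‖x i‖ ^ 2) * Real.sqrt (∑ j, ‖y j‖ ^ 2) := by
  refine specNorm_le_bound _ (by positivity) fun v => ?_
  have h1 : ∀ i, (Matrix.of fun i j => x i * y j).mulVec v i = x i * ∑ j, y j * v j :=
    outer_mulVec x y v
  calc Real.sqrt (∑ i, ‖(Matrix.of fun i j => x i * y j).mulVec v i‖ ^ 2)
      = Real.sqrt (∑ i, ‖x i * ∑ j, y j * v j‖ ^ 2) := by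
        congr 1; exact Finset.sum_congr rfl fun i _ => by rw [h1]
    _ = Real.sqrt (∑ i, ‖x i‖ ^ 2) * ‖∑ j, y j * v j‖ :=
        sqrt_sum_smul x _
    _ ≤ Real.sqrt (∑ i, ‖x i‖ ^ 2) *
          (Real.sqrt (∑ j, ‖y j‖ ^ 2) * Real.sqrt (∑ j, ‖v j‖ ^ 2)) := by
        refine mul_le_mul_of_nonneg_left ?_ (Real.sqrt_nonneg _)
        calc ‖∑ j, y j * v j‖ ≤ ∑ j, ‖y j * v j‖ :=
              norm_sum_le _ _
          _ = ∑ j, ‖y j‖ * ‖v j‖ := by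
              exact Finset.sum_congr rfl fun j _ => norm_mul _ _
          _ ≤ _ := Real.sum_mul_le_sqrt_mul_sqrt _ _ _
    _ = _ := by ring

set_option maxHeartbeats 2000000 in
lemma specNorm_outer_ge {m n : ℕ} (x : Fin m → ℂ) (y : Fin n → ℂ)
    (hy : 0 < Real.sqrt (∑ j, ‖y j‖ ^ 2)) :
    Real.sqrt (∑ i, ‖x i‖ ^ 2) * Real.sqrt (∑ j, ‖y j‖ ^ 2)
      ≤ specNorm (Matrix.of fun i j => x i * y j) := by
  have hs : ∑ j, y j * (starRingEnd ℂ) (y j)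
      = (((∑ j, ‖y j‖ ^ 2 : ℝ)) : ℂ) := by
    rw [Complex.ofReal_sum]
    refine Finset.sum_congr rfl fun j _ => ?_
    rw [Complex.mul_conj, Complex.normSq_eq_norm_sq]
  have h1 := specNorm_mulVec_le (Matrix.of fun i j => x i * y j)
      (fun j => (starRingEnd ℂ) (y j))
  have h2 : Real.sqrt (∑ i, ‖
        (Matrix.of fun i j => x i * y j).mulVec (fun j => (starRingEnd ℂ) (y j)) i‖ ^ 2)
      = Real.sqrt (∑ i, ‖x i‖ ^ 2) * (∑ j, ‖y j‖ ^ 2) := by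
    have he : ∀ i, (Matrix.of fun i j => x i * y j).mulVec (fun j => (starRingEnd ℂ) (y j)) i
        = x i * (((∑ j, ‖y j‖ ^ 2 : ℝ)) : ℂ) := fun i => by
      rw [outer_mulVec, hs]
    calc Real.sqrt (∑ i, ‖
          (Matrix.of fun i j => x i * y j).mulVec (fun j => (starRingEnd ℂ) (y j)) i‖ ^ 2)
        = Real.sqrt (∑ i, ‖x i * (((∑ j, ‖y j‖ ^ 2 : ℝ)) : ℂ)‖ ^ 2) := by
          congr 1; exact Finset.sum_congr rfl fun i _ => by rw [he i]
      _ = Real.sqrt (∑ i, ‖x i‖ ^ 2)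
            * ‖(((∑ j, ‖y j‖ ^ 2 : ℝ)) : ℂ)‖ :=
            sqrt_sum_smul x (((∑ j, ‖y j‖ ^ 2 : ℝ)) : ℂ)
      _ = Real.sqrt (∑ i, ‖x i‖ ^ 2) * (∑ j, ‖y j‖ ^ 2) := by
          rw [Complex.norm_real, Real.norm_of_nonneg (by positivity)]
  have h3 : Real.sqrt (∑ j, ‖(starRingEnd ℂ) (y j)‖ ^ 2)
      = Real.sqrt (∑ j, ‖y j‖ ^ 2) := by
    congr 1
    exact Finset.sum_congr rfl fun j _ => by rw [Complex.norm_conj]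
  rw [h2, h3] at h1
  refine (mul_le_mul_iff_left₀ hy).mp ?_
  calc Real.sqrt (∑ i, ‖x i‖ ^ 2) * Real.sqrt (∑ j, ‖y j‖ ^ 2)
        * Real.sqrt (∑ j, ‖y j‖ ^ 2)
      = Real.sqrt (∑ i, ‖x i‖ ^ 2)
        * (Real.sqrt (∑ j, ‖y j‖ ^ 2) * Real.sqrt (∑ j, ‖y j‖ ^ 2)) := by
        ring
    _ = Real.sqrt (∑ i, ‖x i‖ ^ 2) * (∑ j, ‖y j‖ ^ 2) := by
        rw [Real.mul_self_sqrt (by positivity : (0:ℝ) ≤ ∑ j, ‖y j‖ ^ 2)]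
    _ ≤ specNorm (Matrix.of fun i j => x i * y j) * Real.sqrt (∑ j, ‖y j‖ ^ 2) := h1

lemma rank_outer_le_one {m n : ℕ} (x : Fin m → ℂ) (y : Fin n → ℂ) :
    (Matrix.of fun i j => x i * y j).rank ≤ 1 := by
  have h : (Matrix.of fun i j => x i * y j) = Matrix.vecMulVec x y := by
    ext i j; simp [Matrix.vecMulVec_apply]
  rw [h, Matrix.vecMulVec_eq (Fin 1)]
  exact le_trans (Matrix.rank_mul_le_right _ _)
    (le_trans (Matrix.rank_le_card_height _) (by simp))

/-- If `H_{k+1} - δ I` is invertible then `B := ((H_{k+1} - δ I)⁻¹)ᴴ` is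
`(0,1)`-upper-separable, and the submatrix of its first `m` rows and last `ℓ` columns has
spectral norm at most `‖(H_{k+1} - δ I)⁻¹‖ · σ_{m-1}(δ)/σ_{k-ℓ+1}(δ)`. -/
theorem stmt6 (N : ℕ) (hN : 1 ≤ N) (H : Matrix (Fin N) (Fin N) ℂ)
    (hHess : ∀ i j : Fin N, (j : ℕ) + 1 < (i : ℕ) → H i j = 0)
    (hsub : ∀ (k : ℕ) (hk : k + 1 < N),
      0 < (H ⟨k + 1, hk⟩ ⟨k, Nat.lt_of_succ_lt hk⟩).re ∧
        (H ⟨k + 1, hk⟩ ⟨k, Nat.lt_of_succ_lt hk⟩).im = 0)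
    (q : ℕ → Polynomial ℂ) (hq0 : q 0 = 1)
    (hqrec : ∀ (k : ℕ) (hk : k + 1 < N),
      Polynomial.C (H ⟨k + 1, hk⟩ ⟨k, Nat.lt_of_succ_lt hk⟩) * q (k + 1) =
        Polynomial.X * q k -
          ∑ j : Fin (k + 1),
            Polynomial.C (H ⟨(j : ℕ), Nat.lt_trans j.isLt hk⟩ ⟨k, Nat.lt_of_succ_lt hk⟩) *
              q (j : ℕ))
    (δ : ℂ) (k : ℕ) (hkN : k < N)
    (Hk1 : Matrix (Fin (k + 1)) (Fin (k + 1)) ℂ)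
    (hHk1 : Hk1 = H.submatrix (Fin.castLE hkN) (Fin.castLE hkN))
    (hinv : IsUnit (Hk1 - δ • 1))
    (B : Matrix (Fin (k + 1)) (Fin (k + 1)) ℂ) (hB : B = ((Hk1 - δ • 1)⁻¹)ᴴ) :
    (∀ (j : ℕ) (hj1 : 1 ≤ j) (hj : j ≤ k + 1),
      Matrix.rank
          (B.submatrix (Fin.castLE hj)
            (fun t : Fin (k + 1 + 1 - j) =>
              (⟨j - 1 + (t : ℕ), by have := t.isLt; omega⟩ : Fin (k + 1)))) ≤ 1) ∧
    (∀ (m ℓ : ℕ) (hm1 : 1 ≤ m) (hm : m ≤ k + 1) (hℓ1 : 1 ≤ ℓ) (hℓ : ℓ + m ≤ k + 2),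
      specNorm
          (B.submatrix (Fin.castLE hm)
            (fun t : Fin ℓ =>
              (⟨k + 1 - ℓ + (t : ℕ), by have := t.isLt; omega⟩ : Fin (k + 1)))) ≤
        specNorm ((Hk1 - δ • 1)⁻¹) * (sigmaP q δ (m - 1) / sigmaP q δ (k + 1 - ℓ))) := by
  set A : Matrix (Fin (k+1)) (Fin (k+1)) ℂ := Hk1 - δ • 1 with hA
  set E : Matrix (Fin (k+1)) (Fin (k+1)) ℂ := A⁻¹ with hE
  set qv : ℕ → ℂ := fun t => (q t).eval δ with hqv
  have hqv0 : qv 0 = 1 := by rw [hqv]; simp [hq0]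
  have hEA : E * A = 1 := Matrix.nonsing_inv_mul A ((Matrix.isUnit_iff_isUnit_det A).mp hinv)
  have hAHk : ∀ (i j : Fin (k+1)), i ≠ j → A i j = H ⟨i.val, by omega⟩ ⟨j.val, by omega⟩ := by
    intro i j hij
    rw [hA, Matrix.sub_apply, Matrix.smul_apply, Matrix.one_apply_ne hij, smul_zero, sub_zero,
      hHk1, Matrix.submatrix_apply]
    rfl
  have hAsub : ∀ (i j : Fin (k+1)), (j:ℕ) + 1 < (i:ℕ) → A i j = 0 := by
    intro i j hij
    rw [hAHk i j (by intro h; rw [h] at hij; omega)]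
    exact hHess _ _ hij
  have hAdiag : ∀ (n : ℕ) (h : n + 1 < k + 1),
      A ⟨n+1, h⟩ ⟨n, by omega⟩ ≠ 0 := by
    intro n h
    rw [hAHk _ _ (by intro hh; have := congrArg Fin.val hh; simp at this)]
    have h2 := hsub n (by omega)
    intro hzero
    rw [show (H ⟨n+1, by omega⟩ ⟨n, by omega⟩ : ℂ) = H ⟨n+1, by omega⟩ ⟨n, Nat.lt_of_succ_lt (by omega)⟩ from rfl] at hzero
    rw [hzero] at h2
    simp at h2
  -- column relation
  have hcol : ∀ (n : ℕ) (hn : n < k),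
      ∑ t : Fin (k+1), qv t * A t ⟨n, by omega⟩ = 0 := by
    intro n hn
    have hk' : n + 1 < N := by omega
    have hrec := congrArg (Polynomial.eval δ) (hqrec n hk')
    simp only [Polynomial.eval_mul, Polynomial.eval_C, Polynomial.eval_X,
      Polynomial.eval_sub, Polynomial.eval_finset_sum] at hrec
    set Fh : ℕ → ℂ := fun t => qv t * (if h : t < N then H ⟨t, h⟩ ⟨n, by omega⟩ else 0) with hFh
    have ha : ∑ t : Fin (k+1), qv t * A t ⟨n, by omega⟩
        = (∑ t ∈ Finset.range (k+1), Fh t) - δ * qv n := by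
      have h1 : ∀ t : Fin (k+1), qv t * A t ⟨n, by omega⟩
          = Fh t.val - qv t.val * (δ * (if t = ⟨n, by omega⟩ then 1 else 0)) := by
        intro t
        rw [hA, Matrix.sub_apply, Matrix.smul_apply, Matrix.one_apply, smul_eq_mul, mul_sub]
        congr 1
        rw [hFh]
        simp only
        rw [dif_pos (by omega : (t:ℕ) < N), hHk1, Matrix.submatrix_apply]
        rfl
      calc ∑ t : Fin (k+1), qv t * A t ⟨n, by omega⟩
          = ∑ t : Fin (k+1), (Fh t.val - qv t.val * (δ * (if t = ⟨n, by omega⟩ then 1 else 0))) :=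
            Finset.sum_congr rfl fun t _ => h1 t
        _ = (∑ t : Fin (k+1), Fh t.val)
              - ∑ t : Fin (k+1), qv t.val * (δ * (if t = ⟨n, by omega⟩ then 1 else 0)) :=
            Finset.sum_sub_distrib _ _
        _ = (∑ t ∈ Finset.range (k+1), Fh t) - δ * qv n := by
            congr 1
            · exact Fin.sum_univ_eq_sum_range Fh (k+1)
            · rw [Finset.sum_congr rfl (fun t _ => by rw [mul_ite, mul_ite, mul_one, mul_zero, mul_zero])]
              rw [Finset.sum_ite_eq' Finset.univ (⟨n, by omega⟩ : Fin (k+1))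
                (fun t => qv t.val * δ)]
              simp [mul_comm]
      -- done
    have hb : ∑ t ∈ Finset.range (k+1), Fh t = ∑ t ∈ Finset.range (n+2), Fh t := by
      refine (Finset.sum_subset (Finset.range_subset_range.mpr (by omega)) ?_).symm
      intro t ht hnt
      rw [Finset.mem_range] at ht hnt
      rw [hFh]
      simp only
      rw [dif_pos (by omega : t < N), hHess _ _ (by show n + 1 < t; omega), mul_zero]
    have hc : ∑ t ∈ Finset.range (n+2), Fh t = ∑ t ∈ Finset.range (n+1), Fh t + Fh (n+1) :=
      Finset.sum_range_succ Fh (n+1)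
    have hd : ∑ t ∈ Finset.range (n+1), Fh t
        = ∑ j : Fin (n+1), H ⟨(j:ℕ), Nat.lt_trans j.isLt hk'⟩ ⟨n, Nat.lt_of_succ_lt hk'⟩
            * (q (j:ℕ)).eval δ := by
      rw [← Fin.sum_univ_eq_sum_range Fh (n+1)]
      refine Finset.sum_congr rfl fun j _ => ?_
      rw [hFh]
      simp only
      rw [dif_pos (by omega : (j:ℕ) < N), mul_comm]
    have he : Fh (n+1) = qv (n+1) * H ⟨n+1, hk'⟩ ⟨n, Nat.lt_of_succ_lt hk'⟩ := by
      rw [hFh]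
      simp only
      rw [dif_pos hk']
    rw [ha, hb, hc, hd, he]
    rw [hqv]
    simp only
    linear_combination hrec
  -- key separability lemma
  have key : ∀ (n : ℕ) (hn : n < k + 1) (i : Fin (k + 1)), n ≤ (i:ℕ) →
      E i ⟨n, hn⟩ = E i 0 * qv n := by
    intro n
    induction n using Nat.strong_induction_on with
    | _ n ih =>
      intro hn i hni
      rcases n with _ | n'
      · rw [hqv0, mul_one]
        congr 1
      · have hn' : n' < k := by omega
        have hrow : ∑ t : Fin (k+1), E i t * A t ⟨n', by omega⟩ = 0 := by
          have h1 := congrArg (fun M : Matrix (Fin (k+1)) (Fin (k+1)) ℂ =>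
            M i (⟨n', by omega⟩ : Fin (k+1))) hEA
          simp only [Matrix.mul_apply] at h1
          exact h1.trans (Matrix.one_apply_ne
            (by intro hh; have := congrArg Fin.val hh; simp at this; omega))
        have hsum : ∑ t : Fin (k+1), (E i t - E i 0 * qv t.val) * A t ⟨n', by omega⟩ = 0 := by
          have expand : ∀ t : Fin (k+1), (E i t - E i 0 * qv t.val) * A t ⟨n', by omega⟩
              = E i t * A t ⟨n', by omega⟩ - E i 0 * (qv t.val * A t ⟨n', by omega⟩) := by
            intro t; ring
          rw [Finset.sum_congr rfl fun t _ => expand t, Finset.sum_sub_distrib,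
            hrow, ← Finset.mul_sum, hcol n' hn', mul_zero, sub_zero]
        have hone : ∀ t : Fin (k+1), t ≠ ⟨n'+1, hn⟩ →
            (E i t - E i 0 * qv t.val) * A t ⟨n', by omega⟩ = 0 := by
          intro t ht
          rcases le_or_gt (t:ℕ) n' with hle | hgt
          · have h2 := ih t.val (by omega) t.isLt i (by omega)
            rw [Fin.eta] at h2
            rw [h2, sub_self, zero_mul]
          · have h3 : (n':ℕ) + 1 < (t:ℕ) := by
              rcases Nat.lt_or_ge (t:ℕ) (n'+2) with h3 | h3
              · exact absurd (Fin.ext (by omega : (t:ℕ) = n'+1)) ht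
              · omega
            rw [hAsub t _ h3, mul_zero]
        have hfin := Finset.sum_eq_single (M := ℂ) (⟨n'+1, hn⟩ : Fin (k+1))
            (fun t _ ht => hone t ht) (fun h => absurd (Finset.mem_univ _) h)
        rw [hfin] at hsum
        rcases mul_eq_zero.mp hsum with h4 | h4
        · exact sub_eq_zero.mp h4
        · exact absurd h4 (hAdiag n' hn)
  have hBentry : ∀ (i j' : Fin (k+1)), (i:ℕ) ≤ (j':ℕ) →
      B i j' = star (qv i.val) * star (E j' 0) := by
    intro i j' hij
    rw [hB, Matrix.conjTranspose_apply]
    have h2 := key i.val i.isLt j' hij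
    rw [Fin.eta] at h2
    rw [h2, star_mul', mul_comm]
  constructor
  · -- rank part
    intro j hj1 hj
    have hsubm : B.submatrix (Fin.castLE hj)
        (fun t : Fin (k + 1 + 1 - j) =>
          (⟨j - 1 + (t : ℕ), by have := t.isLt; omega⟩ : Fin (k + 1)))
        = Matrix.of (fun (i : Fin j) (t : Fin (k + 1 + 1 - j)) =>
            star (qv i.val) *
              star (E (⟨j - 1 + (t : ℕ), by have := t.isLt; omega⟩ : Fin (k + 1)) 0)) := by
      ext i t
      rw [Matrix.submatrix_apply, Matrix.of_apply]
      exact hBentry _ _ (by show (i:ℕ) ≤ j - 1 + (t:ℕ); have := i.isLt; have := t.isLt; omega)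
    rw [hsubm]
    exact rank_outer_le_one (fun i : Fin j => star (qv i.val))
      (fun t : Fin (k + 1 + 1 - j) =>
        star (E (⟨j - 1 + (t : ℕ), by have := t.isLt; omega⟩ : Fin (k + 1)) 0))
  · -- norm part
    intro m ℓ hm1 hm hℓ1 hℓ
    have hsubm : B.submatrix (Fin.castLE hm)
        (fun t : Fin ℓ => (⟨k + 1 - ℓ + (t : ℕ), by have := t.isLt; omega⟩ : Fin (k + 1)))
        = Matrix.of (fun (i : Fin m) (t : Fin ℓ) =>
            star (qv i.val) *
              star (E (⟨k + 1 - ℓ + (t : ℕ), by have := t.isLt; omega⟩ : Fin (k + 1)) 0)) := by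
      ext i t
      rw [Matrix.submatrix_apply, Matrix.of_apply]
      exact hBentry _ _ (by show (i:ℕ) ≤ k + 1 - ℓ + (t:ℕ); have := i.isLt; have := t.isLt; omega)
    have hXval : Real.sqrt (∑ i : Fin m, ‖star (qv i.val)‖ ^ 2)
        = sigmaP q δ (m - 1) := by
      rw [sigmaP]
      have h5 : m - 1 + 1 = m := by omega
      rw [h5, ← Fin.sum_univ_eq_sum_range (fun t => ‖(q t).eval δ‖ ^ 2) m]
      congr 1
      exact Finset.sum_congr rfl fun i _ => congrArg (· ^ 2) (Complex.norm_conj (qv i.val))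
    have hYG : Real.sqrt (∑ t : Fin ℓ, ‖star
          (E (⟨k + 1 - ℓ + (t : ℕ), by have := t.isLt; omega⟩ : Fin (k + 1)) 0)‖ ^ 2)
        = Real.sqrt (∑ t : Fin ℓ, ‖
            E (⟨k + 1 - ℓ + (t : ℕ), by have := t.isLt; omega⟩ : Fin (k + 1)) 0‖ ^ 2) :=
      congrArg Real.sqrt
        (Finset.sum_congr rfl fun t _ => congrArg (· ^ 2) (Complex.norm_conj _))
    have hσval : Real.sqrt (∑ s : Fin (k + 2 - ℓ), ‖qv s.val‖ ^ 2)
        = sigmaP q δ (k + 1 - ℓ) := by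
      rw [sigmaP]
      have h6 : k + 1 - ℓ + 1 = k + 2 - ℓ := by omega
      rw [h6, ← Fin.sum_univ_eq_sum_range (fun t => ‖(q t).eval δ‖ ^ 2) (k+2-ℓ)]
    have hσ1 : 1 ≤ sigmaP q δ (k + 1 - ℓ) := by
      rw [sigmaP, show (1:ℝ) = Real.sqrt 1 from (Real.sqrt_one).symm]
      refine Real.sqrt_le_sqrt ?_
      have h7 : (1:ℝ) = ‖(q 0).eval δ‖ ^ 2 := by
        rw [hq0]; simp
      rw [h7]
      exact Finset.single_le_sum (f := fun j => ‖(q j).eval δ‖ ^ 2)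
        (fun j _ => by positivity) (Finset.mem_range.mpr (by omega))
    have hσpos : (0:ℝ) < sigmaP q δ (k + 1 - ℓ) := lt_of_lt_of_le one_pos hσ1
    have hE2 : E.submatrix
        (fun t : Fin ℓ => (⟨k + 1 - ℓ + (t : ℕ), by have := t.isLt; omega⟩ : Fin (k + 1)))
        (fun s : Fin (k + 2 - ℓ) => Fin.castLE (by omega : k + 2 - ℓ ≤ k + 1) s)
        = Matrix.of (fun (t : Fin ℓ) (s : Fin (k + 2 - ℓ)) =>
            E (⟨k + 1 - ℓ + (t : ℕ), by have := t.isLt; omega⟩ : Fin (k + 1)) 0 * qv s.val) := by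
      ext t s
      rw [Matrix.submatrix_apply, Matrix.of_apply]
      exact key s.val (by have := s.isLt; omega)
        (⟨k + 1 - ℓ + (t : ℕ), by have := t.isLt; omega⟩ : Fin (k + 1))
        (by show (s:ℕ) ≤ k + 1 - ℓ + (t:ℕ); have := s.isLt; omega)
    have hlow : Real.sqrt (∑ t : Fin ℓ, ‖
          E (⟨k + 1 - ℓ + (t : ℕ), by have := t.isLt; omega⟩ : Fin (k + 1)) 0‖ ^ 2)
          * sigmaP q δ (k + 1 - ℓ) ≤ specNorm E := by
      have h8 := specNorm_outer_ge
        (fun t : Fin ℓ =>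
          E (⟨k + 1 - ℓ + (t : ℕ), by have := t.isLt; omega⟩ : Fin (k + 1)) 0)
        (fun s : Fin (k + 2 - ℓ) => qv s.val)
        (by rw [hσval]; exact hσpos)
      rw [hσval] at h8
      refine le_trans h8 (le_trans (le_of_eq (congrArg specNorm hE2.symm)) ?_)
      refine specNorm_submatrix_le E _ _ ?_ (Fin.castLE_injective _)
      intro a b hab
      have := congrArg Fin.val hab
      simp only at this
      exact Fin.ext (by omega)
    rw [hsubm]
    refine le_trans (specNorm_outer_le (fun i : Fin m => star (qv i.val))
      (fun t : Fin ℓ =>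
        star (E (⟨k + 1 - ℓ + (t : ℕ), by have := t.isLt; omega⟩ : Fin (k + 1)) 0))) ?_
    beta_reduce
    rw [hXval, hYG]
    have hσm0 : 0 ≤ sigmaP q δ (m - 1) := Real.sqrt_nonneg _
    have hfinal : Real.sqrt (∑ t : Fin ℓ, ‖
          E (⟨k + 1 - ℓ + (t : ℕ), by have := t.isLt; omega⟩ : Fin (k + 1)) 0‖ ^ 2)
        ≤ specNorm E / sigmaP q δ (k + 1 - ℓ) := by
      rw [le_div_iff₀ hσpos]
      exact hlow
    calc sigmaP q δ (m - 1) * Real.sqrt (∑ t : Fin ℓ, ‖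
          E (⟨k + 1 - ℓ + (t : ℕ), by have := t.isLt; omega⟩ : Fin (k + 1)) 0‖ ^ 2)
        ≤ sigmaP q δ (m - 1) * (specNorm E / sigmaP q δ (k + 1 - ℓ)) :=
          mul_le_mul_of_nonneg_left hfinal hσm0
      _ = specNorm E * (sigmaP q δ (m - 1) / sigmaP q δ (k + 1 - ℓ)) := by ring
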